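/- Let S_n(x;α,β,r) = Σ_{k=0}^{n} S(n,k;α,β,r)·x^k be the generalized exponential (Bell) polynomial. Then for all real α, β ≠ 0, r, x > 0, all λ ∈ ℕ with λ ≥ 1, and all n ≥ 0: A^{λ,x}_n(α,β,r) = ((-1)^n / Γ(λ)) · ∫_0^∞ z^{λ-1} · S_n(-βxz; α, -β, -r) · e^{-z} dz. -/

import Mathlib

open Finset

/-- Generalized factorial polynomial `(t|α)_n = ∏_{j=0}^{n-1} (t - jα)`. -/
noncomputable def gfact (t α : ℝ) (n : ℕ) : ℝ := ∏ j ∈ Finset.range n, (t - j * α)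

/-- Hsu–Shiue generalized Stirling numbers (explicit formula, β ≠ 0). -/
noncomputable def HS (n k : ℕ) (α β γ : ℝ) : ℝ :=
  (1 / (β ^ k * (Nat.factorial k : ℝ))) *
    ∑ s ∈ Finset.range (k + 1), (-1 : ℝ) ^ (k - s) * (Nat.choose k s : ℝ) * gfact (β * s + γ) α n

/-- Second-type higher order generalized geometric polynomials. -/
noncomputable def A (lam : ℕ) (x : ℝ) (n : ℕ) (α β γ : ℝ) : ℝ :=
  ∑ k ∈ Finset.range (n + 1),
    (Nat.choose (k + lam - 1) k : ℝ) * (-1 : ℝ) ^ (n + k) * β ^ k * (Nat.factorial k : ℝ) *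
      HS n k α (-β) (-γ) * x ^ k

/-- Generalized exponential (Bell) polynomials. -/
noncomputable def Sexp (n : ℕ) (x α β r : ℝ) : ℝ :=
  ∑ k ∈ Finset.range (n + 1), HS n k α β r * x ^ k

lemma integrableOn_pow_mul_exp_neg (m : ℕ) :
    MeasureTheory.IntegrableOn (fun z : ℝ => z ^ m * Real.exp (-z)) (Set.Ioi 0) := by
  have h := Real.GammaIntegral_convergent (s := (m : ℝ) + 1) (by positivity)
  refine (h.congr_fun ?_ measurableSet_Ioi).mono_set le_rfl
  intro z hz
  simp only [add_sub_cancel_right, Real.rpow_natCast, mul_comm]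

lemma integral_pow_mul_exp_neg (m : ℕ) :
    ∫ z in Set.Ioi (0 : ℝ), z ^ m * Real.exp (-z) = (Nat.factorial m : ℝ) := by
  have h := Real.Gamma_eq_integral (s := (m : ℝ) + 1) (by positivity)
  rw [Real.Gamma_nat_eq_factorial] at h
  rw [h]
  refine MeasureTheory.setIntegral_congr_fun measurableSet_Ioi fun z hz => ?_
  simp only [add_sub_cancel_right, Real.rpow_natCast, mul_comm]

theorem stmt11 (α β r x : ℝ) (hβ : β ≠ 0) (hx : 0 < x) (lam : ℕ) (hlam : 1 ≤ lam) (n : ℕ) :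
    A lam x n α β r =
      ((-1 : ℝ) ^ n / Real.Gamma (lam : ℝ)) *
        ∫ z in Set.Ioi (0 : ℝ), z ^ (lam - 1) * Sexp n (-β * x * z) α (-β) (-r) * Real.exp (-z) := by
  have hpoint : ∀ z : ℝ,
      z ^ (lam - 1) * Sexp n (-β * x * z) α (-β) (-r) * Real.exp (-z) =
      ∑ k ∈ Finset.range (n + 1),
        (HS n k α (-β) (-r) * (-β * x) ^ k) * (z ^ (lam - 1 + k) * Real.exp (-z)) := by
    intro z
    simp only [Sexp, Finset.sum_mul, Finset.mul_sum, pow_add, mul_pow]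
    refine Finset.sum_congr rfl fun k _ => by ring
  have hint : (∫ z in Set.Ioi (0 : ℝ),
      z ^ (lam - 1) * Sexp n (-β * x * z) α (-β) (-r) * Real.exp (-z)) =
      ∑ k ∈ Finset.range (n + 1),
        (HS n k α (-β) (-r) * (-β * x) ^ k) * (Nat.factorial (lam - 1 + k) : ℝ) := by
    simp only [hpoint]
    rw [MeasureTheory.integral_finset_sum]
    · refine Finset.sum_congr rfl fun k _ => ?_
      rw [MeasureTheory.integral_const_mul, integral_pow_mul_exp_neg]
    · intro k _
      exact (integrableOn_pow_mul_exp_neg (lam - 1 + k)).const_mul _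
  rw [hint]
  have hG : Real.Gamma (lam : ℝ) = (Nat.factorial (lam - 1) : ℝ) := by
    have : (lam : ℝ) = ((lam - 1 : ℕ) : ℝ) + 1 := by
      push_cast [Nat.cast_sub hlam]; ring
    rw [this, Real.Gamma_nat_eq_factorial]
  rw [hG, Finset.mul_sum, A]
  refine Finset.sum_congr rfl fun k _ => ?_
  have hfac : (Nat.factorial (lam - 1 + k) : ℝ) =
      (Nat.choose (k + lam - 1) k : ℝ) * (Nat.factorial k : ℝ) * (Nat.factorial (lam - 1) : ℝ) := by
    have h1 : k + lam - 1 = k + (lam - 1) := by omega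
    have h2 := Nat.choose_mul_factorial_mul_factorial (Nat.le_add_right k (lam - 1))
    have h3 : k + (lam - 1) - k = lam - 1 := by omega
    rw [h3] at h2
    rw [Nat.add_comm (lam - 1) k, h1, ← Nat.cast_mul, ← Nat.cast_mul, h2]
  rw [hfac]
  have hne : (Nat.factorial (lam - 1) : ℝ) ≠ 0 := Nat.cast_ne_zero.mpr (Nat.factorial_ne_zero _)
  field_simp
  ring
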